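/- Let f : X → X be a homeomorphism of a compact metric space and φ : X → ℝ continuous. If for every x ∈ X there exists n ≥ 1 with ∑_{i=0}^{n-1} φ(fⁱx) < log ν (ν < 1 fixed), then the first such time n₀(x) is uniformly bounded over X, and consequently there exist C > 0 and λ ∈ (ν^{1/N}, 1) with exp(∑_{i=0}^{n-1} φ(fⁱx)) ≤ C λⁿ for all x ∈ X and n ≥ 0. -/

import Mathlib

/-- If every point of a compact space has some time `n ≥ 1` at which the Birkhoff sum of `φ`
drops below `log ν` (with `0 < ν < 1`), then the first such time is uniformly bounded by
some `N`, and consequently there are `C > 0` and `λ ∈ (ν^{1/N}, 1)` with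
`exp(Sₙφ(x)) ≤ C λⁿ` for all `x` and `n ≥ 0`. -/
theorem stmt3 {X : Type*} [MetricSpace X] [CompactSpace X] [Nonempty X]
    (f : X → X) (hf : Continuous f) (hbij : Function.Bijective f)
    (φ : X → ℝ) (hφ : Continuous φ) (ν : ℝ) (hν0 : 0 < ν) (hν1 : ν < 1)
    (h : ∀ x : X, ∃ n : ℕ, 1 ≤ n ∧ ∑ i ∈ Finset.range n, φ (f^[i] x) < Real.log ν) :
    ∃ N : ℕ, 1 ≤ N ∧
      (∀ x : X, ∃ n : ℕ, 1 ≤ n ∧ n ≤ N ∧ ∑ i ∈ Finset.range n, φ (f^[i] x) < Real.log ν) ∧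
      ∃ C : ℝ, 0 < C ∧ ∃ lam : ℝ, ν ^ (1 / (N : ℝ)) < lam ∧ lam < 1 ∧
        ∀ x : X, ∀ n : ℕ,
          Real.exp (∑ i ∈ Finset.range n, φ (f^[i] x)) ≤ C * lam ^ n := by
  set c := Real.log ν with hc_def
  have hc : c < 0 := Real.log_neg hν0 hν1
  -- open cover by first-crossing sets
  have hopen : ∀ n : ℕ,
      IsOpen {x : X | ∑ i ∈ Finset.range (n+1), φ (f^[i] x) < c} := by
    intro n
    have : Continuous fun x : X => ∑ i ∈ Finset.range (n+1), φ (f^[i] x) :=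
      continuous_finset_sum _ (fun i _ => hφ.comp (hf.iterate i))
    exact isOpen_lt this continuous_const
  have hcov : (Set.univ : Set X) ⊆
      ⋃ n : ℕ, {x : X | ∑ i ∈ Finset.range (n+1), φ (f^[i] x) < c} := by
    intro x _
    obtain ⟨n, hn1, hns⟩ := h x
    refine Set.mem_iUnion.2 ⟨n - 1, ?_⟩
    simpa [Nat.sub_add_cancel hn1] using hns
  obtain ⟨s, hs⟩ := isCompact_univ.elim_finite_subcover _ hopen hcov
  set N := s.sup id + 1 with hN_def
  have hN1 : 1 ≤ N := Nat.le_add_left 1 _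
  have hNpos : (0 : ℝ) < (N : ℝ) := by exact_mod_cast hN1
  -- uniform first crossing
  have P : ∀ x : X, ∃ n : ℕ, 1 ≤ n ∧ n ≤ N ∧
      ∑ i ∈ Finset.range n, φ (f^[i] x) < c := by
    intro x
    have hx := hs (Set.mem_univ x)
    simp only [Set.mem_iUnion] at hx
    obtain ⟨n, hn, hxn⟩ := hx
    exact ⟨n + 1, Nat.le_add_left 1 n,
      Nat.add_le_add_right (Finset.le_sup (f := id) hn) 1, hxn⟩
  -- bound M on φ
  obtain ⟨z, _, hz⟩ := isCompact_univ.exists_isMaxOn Set.univ_nonempty hφ.continuousOn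
  set M := max (φ z) 0 with hM_def
  have hM0 : (0 : ℝ) ≤ M := le_max_right _ _
  have hMle : ∀ y : X, φ y ≤ M := fun y => (hz (Set.mem_univ y)).trans (le_max_left _ _)
  -- key estimate by strong induction
  have key : ∀ n : ℕ, ∀ x : X,
      ∑ i ∈ Finset.range n, φ (f^[i] x) ≤ (n : ℝ) / N * c + ((N : ℝ) * M - c) := by
    intro n
    induction n using Nat.strong_induction_on with
    | _ n ih =>
      intro x
      by_cases hn : n ≤ N
      · have h1 : ∑ i ∈ Finset.range n, φ (f^[i] x) ≤ (n : ℝ) * M := by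
          calc ∑ i ∈ Finset.range n, φ (f^[i] x) ≤ ∑ i ∈ Finset.range n, M :=
                Finset.sum_le_sum (fun i _ => hMle _)
            _ = (n : ℝ) * M := by simp [mul_comm]
        have hnN : (n : ℝ) ≤ (N : ℝ) := by exact_mod_cast hn
        have ht1 : (n : ℝ) / N ≤ 1 := by rw [div_le_one hNpos]; exact hnN
        nlinarith [mul_le_mul_of_nonneg_right hnN hM0]
      · push_neg at hn
        obtain ⟨m, hm1, hmN, hmc⟩ := P x
        have hmn : m ≤ n := hmN.trans hn.le
        have hsplit : ∑ i ∈ Finset.range n, φ (f^[i] x)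
            = (∑ i ∈ Finset.range m, φ (f^[i] x))
              + ∑ i ∈ Finset.range (n - m), φ (f^[i] (f^[m] x)) := by
          have hn' : n = m + (n - m) := (Nat.add_sub_cancel' hmn).symm
          conv_lhs => rw [hn']
          rw [Finset.sum_range_add]
          congr 1
          refine Finset.sum_congr rfl fun i _ => ?_
          rw [add_comm m i, Function.iterate_add_apply]
        have hrec := ih (n - m) (by omega) (f^[m] x)
        have hcast : ((n - m : ℕ) : ℝ) = (n : ℝ) - m := by
          rw [Nat.cast_sub hmn]
        rw [hcast] at hrec
        have hmN' : (m : ℝ) / N ≤ 1 := by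
          rw [div_le_one hNpos]; exact_mod_cast hmN
        have hdiv : ((n : ℝ) - m) / N = (n : ℝ) / N - (m : ℝ) / N := by ring
        rw [hdiv] at hrec
        have hfin : c ≤ (m : ℝ) / N * c := by nlinarith
        calc ∑ i ∈ Finset.range n, φ (f^[i] x)
            = (∑ i ∈ Finset.range m, φ (f^[i] x))
              + ∑ i ∈ Finset.range (n - m), φ (f^[i] (f^[m] x)) := hsplit
          _ ≤ c + (((n : ℝ) / N - (m : ℝ) / N) * c + ((N : ℝ) * M - c)) :=
              add_le_add hmc.le hrec
          _ ≤ (n : ℝ) / N * c + ((N : ℝ) * M - c) := by nlinarith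
  -- conclude
  refine ⟨N, hN1, P, Real.exp ((N : ℝ) * M - c), Real.exp_pos _,
    (Real.exp (c / N) + 1) / 2, ?_, ?_, ?_⟩
  · have hμ : ν ^ (1 / (N : ℝ)) = Real.exp (c / N) := by
      rw [Real.rpow_def_of_pos hν0, ← hc_def]
      ring_nf
    rw [hμ]
    have : Real.exp (c / N) < 1 :=
      Real.exp_lt_one_iff.2 (div_neg_of_neg_of_pos hc hNpos)
    linarith
  · have : Real.exp (c / N) < 1 :=
      Real.exp_lt_one_iff.2 (div_neg_of_neg_of_pos hc hNpos)
    linarith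
  · intro x n
    have h1 := key n x
    have h2 : Real.exp (∑ i ∈ Finset.range n, φ (f^[i] x))
        ≤ Real.exp ((n : ℝ) / N * c + ((N : ℝ) * M - c)) := Real.exp_le_exp.2 h1
    have h3 : Real.exp ((n : ℝ) / N * c + ((N : ℝ) * M - c))
        = Real.exp ((N : ℝ) * M - c) * Real.exp (c / N) ^ n := by
      rw [Real.exp_add]
      rw [mul_comm]
      congr 1
      rw [← Real.exp_nat_mul]
      congr 1
      field_simp
    have h4 : Real.exp (c / N) ^ n ≤ ((Real.exp (c / N) + 1) / 2) ^ n := by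
      apply pow_le_pow_left₀ (Real.exp_pos _).le
      have : Real.exp (c / N) < 1 :=
        Real.exp_lt_one_iff.2 (div_neg_of_neg_of_pos hc hNpos)
      linarith
    calc Real.exp (∑ i ∈ Finset.range n, φ (f^[i] x))
        ≤ Real.exp ((N : ℝ) * M - c) * Real.exp (c / N) ^ n := h2.trans_eq h3
      _ ≤ Real.exp ((N : ℝ) * M - c) * ((Real.exp (c / N) + 1) / 2) ^ n :=
          mul_le_mul_of_nonneg_left h4 (Real.exp_pos _).le
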